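/- arXiv:2011.04221 — 5 statements merged into one kernel-verified Lean document; each statement's English description precedes it below -/
import Mathlib

section
/- For any real numbers m and t with t > 1 and m ≥ t, we have m - (t - √(t(t-1))) ≤ √(m(m-1)) ≤ m - 1/2. -/
theorem stmt0 (m t : ℝ) (ht : 1 < t) (hmt : t ≤ m) :
    m - (t - Real.sqrt (t * (t - 1))) ≤ Real.sqrt (m * (m - 1)) ∧
      Real.sqrt (m * (m - 1)) ≤ m - 1 / 2 := by
  have hm : 1 < m := lt_of_lt_of_le ht hmt
  have hmn : (0:ℝ) ≤ m * (m - 1) := by nlinarith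
  have htn : (0:ℝ) ≤ t * (t - 1) := by nlinarith
  set s := Real.sqrt (t * (t - 1)) with hs
  have hs0 : 0 ≤ s := Real.sqrt_nonneg _
  have hs2 : s ^ 2 = t * (t - 1) := Real.sq_sqrt htn
  have hsle : s ≤ t - 1/2 := by
    nlinarith [hs2, hs0]
  constructor
  · rcases le_or_gt (m - (t - s)) 0 with h | h
    · exact h.trans (Real.sqrt_nonneg _)
    · rw [show m - (t - s) = m - t + s by ring] at *
      rw [Real.le_sqrt (by linarith)]
      nlinarith [hs2, hs0, hsle]
      exact hmn
  · rw [show m - 1/2 = Real.sqrt ((m - 1/2)^2) from (Real.sqrt_sq (by linarith)).symm]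
    apply Real.sqrt_le_sqrt
    nlinarith
end

section
/- Let a_1, ..., a_r be the points (s/√2)·e_1, ..., (s/√2)·e_r in ℝ^r (scaled standard basis vectors, forming a regular simplex of side length s > 0, r ≥ 2). Then the minimum over c ∈ ℝ^r of ∑_{i=1}^r ‖a_i - c‖ equals s·√(r(r-1)/2), and it is attained at the centroid c = (s/(r√2), ..., s/(r√2)). -/
/-- The vertices of a regular simplex of side length `s`: scaled standard basis vectors. -/
noncomputable def simplexPoint (r : ℕ) (s : ℝ) (i : Fin r) : EuclideanSpace ℝ (Fin r) :=
  EuclideanSpace.single i (s / Real.sqrt 2)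

/-- The centroid of the simplex vertices. -/
noncomputable def simplexCentroid (r : ℕ) (s : ℝ) : EuclideanSpace ℝ (Fin r) :=
  (WithLp.equiv 2 (Fin r → ℝ)).symm (fun _ => s / (r * Real.sqrt 2))

theorem stmt2 (r : ℕ) (hr : 2 ≤ r) (s : ℝ) (hs : 0 < s) :
    (∑ i : Fin r, ‖simplexPoint r s i - simplexCentroid r s‖)
        = s * Real.sqrt ((r : ℝ) * ((r : ℝ) - 1) / 2) ∧
    ∀ c : EuclideanSpace ℝ (Fin r),
      (∑ i : Fin r, ‖simplexPoint r s i - simplexCentroid r s‖) ≤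
        ∑ i : Fin r, ‖simplexPoint r s i - c‖ := by
  have hr2 : (2:ℝ) ≤ (r:ℝ) := by exact_mod_cast hr
  have hr0 : (0:ℝ) < (r:ℝ) := by linarith
  have hrne : (r:ℝ) ≠ 0 := ne_of_gt hr0
  have h2 : (0:ℝ) < Real.sqrt 2 := by positivity
  set t : ℝ := s / Real.sqrt 2 with ht
  have ht2 : t ^ 2 = s ^ 2 / 2 := by
    rw [ht, div_pow, Real.sq_sqrt (by norm_num : (0:ℝ) ≤ 2)]
  set d : ℝ := s * Real.sqrt (((r:ℝ) - 1) / (2 * r)) with hd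
  have hd0 : 0 < d := by
    apply mul_pos hs
    apply Real.sqrt_pos.mpr
    apply div_pos (by linarith) (by positivity)
  have hcoord : ∀ i j : Fin r, (simplexPoint r s i - simplexCentroid r s) j
      = (if j = i then t else 0) - t / r := by
    intro i j
    have : s / ((r:ℝ) * Real.sqrt 2) = t / r := by
      rw [ht, div_div, mul_comm]
    simp [simplexPoint, simplexCentroid, EuclideanSpace.single_apply, this]
    rfl
  have hnorm : ∀ i : Fin r, ‖simplexPoint r s i - simplexCentroid r s‖ = d := by
    intro i
    rw [EuclideanSpace.norm_eq]
    have hsum : ∑ j, ‖(simplexPoint r s i - simplexCentroid r s) j‖^2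
        = s ^ 2 * (((r:ℝ) - 1) / (2 * r)) := by
      calc ∑ j, ‖(simplexPoint r s i - simplexCentroid r s) j‖^2
          = ∑ j : Fin r, (((if j = i then t else 0) - t/r)^2) := by
            refine Finset.sum_congr rfl fun j _ => by
              rw [Real.norm_eq_abs, sq_abs, hcoord]
        _ = ∑ j : Fin r, ((t/r)^2 + if j = i then (t - t/r)^2 - (t/r)^2 else 0) := by
            refine Finset.sum_congr rfl fun j _ => ?_
            split <;> ring
        _ = (r:ℝ) * (t/r)^2 + ((t - t/r)^2 - (t/r)^2) := by
            rw [Finset.sum_add_distrib, Finset.sum_const, Finset.sum_ite_eq']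
            simp [Finset.card_univ, nsmul_eq_mul]
        _ = t ^ 2 * (((r:ℝ) - 1) / r) := by field_simp; ring
        _ = s ^ 2 * (((r:ℝ) - 1) / (2 * r)) := by rw [ht2]; field_simp; try ring
    rw [hsum, hd, show s ^ 2 * (((r:ℝ) - 1) / (2 * r)) = s ^ 2 * (((r:ℝ) - 1) / (2 * r)) from rfl,
      Real.sqrt_mul (sq_nonneg s), Real.sqrt_sq hs.le]
  have hvalue : (∑ i : Fin r, ‖simplexPoint r s i - simplexCentroid r s‖)
      = s * Real.sqrt ((r : ℝ) * ((r : ℝ) - 1) / 2) := by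
    rw [Finset.sum_congr rfl fun i _ => hnorm i, Finset.sum_const, Finset.card_univ,
      Fintype.card_fin, nsmul_eq_mul]
    have : (r : ℝ) * ((r : ℝ) - 1) / 2 = (r:ℝ)^2 * (((r:ℝ) - 1) / (2 * r)) := by
      field_simp
    rw [this, Real.sqrt_mul (sq_nonneg _), Real.sqrt_sq hr0.le, hd]
    ring
  refine ⟨hvalue, ?_⟩
  -- minimality
  set u : Fin r → EuclideanSpace ℝ (Fin r) :=
    fun i => d⁻¹ • (simplexPoint r s i - simplexCentroid r s) with hu
  have hunorm : ∀ i, ‖u i‖ = 1 := by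
    intro i
    rw [hu]
    simp only [norm_smul, hnorm, Real.norm_eq_abs, abs_inv, abs_of_pos hd0]
    field_simp
  have husum : ∑ i, u i = 0 := by
    rw [hu, ← Finset.smul_sum]
    have : ∑ i, (simplexPoint r s i - simplexCentroid r s) = 0 := by
      ext j
      have happ : (∑ i, (simplexPoint r s i - simplexCentroid r s)) j
          = ∑ i, (simplexPoint r s i - simplexCentroid r s) j := by
        rw [WithLp.ofLp_sum, Finset.sum_apply]
      rw [happ]
      simp only [hcoord]
      rw [Finset.sum_sub_distrib, Finset.sum_ite_eq, Finset.sum_const, Finset.card_univ,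
        Fintype.card_fin, nsmul_eq_mul]
      simp only [PiLp.zero_apply, Finset.mem_univ, if_pos]
      field_simp
      ring
    rw [this, smul_zero]
  have hinner : ∀ i, (inner ℝ (simplexPoint r s i - simplexCentroid r s) (u i) : ℝ) = d := by
    intro i
    rw [hu]
    simp only [real_inner_smul_right, real_inner_self_eq_norm_sq, hnorm]
    field_simp
  intro c
  calc ∑ i : Fin r, ‖simplexPoint r s i - simplexCentroid r s‖
      = ∑ i : Fin r, (inner ℝ (simplexPoint r s i - simplexCentroid r s) (u i) : ℝ) := by
        refine Finset.sum_congr rfl fun i _ => ?_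
        rw [hinner, hnorm]
    _ = ∑ i : Fin r, (inner ℝ (simplexPoint r s i - c) (u i) : ℝ)
          + (inner ℝ (c - simplexCentroid r s) (∑ i, u i) : ℝ) := by
        rw [inner_sum, ← Finset.sum_add_distrib]
        refine Finset.sum_congr rfl fun i _ => ?_
        rw [← inner_add_left, sub_add_sub_cancel]
    _ = ∑ i : Fin r, (inner ℝ (simplexPoint r s i - c) (u i) : ℝ) := by
        rw [husum, inner_zero_right, add_zero]
    _ ≤ ∑ i : Fin r, ‖simplexPoint r s i - c‖ := by
        refine Finset.sum_le_sum fun i _ => ?_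
        calc (inner ℝ (simplexPoint r s i - c) (u i) : ℝ)
            ≤ ‖simplexPoint r s i - c‖ * ‖u i‖ := real_inner_le_norm _ _
          _ = ‖simplexPoint r s i - c‖ := by rw [hunorm, mul_one]
end

section
/- Let G be a finite simple graph, let M be a maximum matching of G, let F' be the graph obtained by deleting the edges of M from G, and let L be a maximum matching of F'. Then G has a vertex cover of size at most |M| + |L|. -/
open SimpleGraph

private lemma mem_eq_out {α : Type*} (e : Sym2 α) {v : α} (h : v ∈ e) :
    v = e.out.1 ∨ v = e.out.2 := by
  have he : Sym2.mk e.out.1 e.out.2 = e := e.out_eq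
  rw [← he, Sym2.mem_iff] at h
  exact h

theorem stmt7 {V : Type*} [Fintype V] (G : SimpleGraph V)
    (M : G.Subgraph) (hM : M.IsMatching)
    (hMmax : ∀ N : G.Subgraph, N.IsMatching → N.edgeSet.ncard ≤ M.edgeSet.ncard)
    (L : (G.deleteEdges M.edgeSet).Subgraph) (hL : L.IsMatching)
    (hLmax : ∀ N : (G.deleteEdges M.edgeSet).Subgraph, N.IsMatching →
      N.edgeSet.ncard ≤ L.edgeSet.ncard) :
    ∃ C : Set V, (∀ e ∈ G.edgeSet, ∃ v ∈ C, v ∈ e) ∧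
      C.ncard ≤ M.edgeSet.ncard + L.edgeSet.ncard := by
  classical
  -- the M-edges disjoint from V(L)
  set E0 : Set (Sym2 V) := {e | e ∈ M.edgeSet ∧ ∀ x ∈ e, x ∉ L.verts} with hE0def
  -- the combined matching N = L ∪ E0
  set N : G.Subgraph :=
    { verts := {v | (∃ w, L.Adj v w) ∨ (∃ w, M.Adj v w ∧ v ∉ L.verts ∧ w ∉ L.verts)}
      Adj := fun v w => L.Adj v w ∨ (M.Adj v w ∧ v ∉ L.verts ∧ w ∉ L.verts)
      adj_sub := by
        rintro v w (h | h)
        · exact ((SimpleGraph.deleteEdges_adj).mp (L.adj_sub h)).1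
        · exact M.adj_sub h.1
      edge_vert := by
        rintro v w (h | h)
        · exact Or.inl ⟨w, h⟩
        · exact Or.inr ⟨w, h⟩
      symm := by
        refine ⟨?_⟩
        rintro v w (h | h)
        · exact Or.inl h.symm
        · exact Or.inr ⟨h.1.symm, h.2.2, h.2.1⟩ } with hNdef
  have hN : N.IsMatching := by
    rintro v (⟨w, hw⟩ | ⟨w, hw, hv', hw'⟩)
    · have hvL : v ∈ L.verts := L.edge_vert hw
      obtain ⟨w', hw', huniq⟩ := hL hvL
      refine ⟨w', Or.inl hw', ?_⟩
      rintro y (hy | hy)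
      · exact huniq y hy
      · exact absurd hvL hy.2.1
    · obtain ⟨w', hw'', huniq⟩ := hM (M.edge_vert hw)
      refine ⟨w, Or.inr ⟨hw, hv', hw'⟩, ?_⟩
      rintro y (hy | hy)
      · exact absurd (L.edge_vert hy) hv'
      · exact (huniq y hy.1).trans (huniq w hw).symm
  -- N's edges are the disjoint union of L's edges and E0
  have hNedge : N.edgeSet = L.edgeSet ∪ E0 := by
    ext e
    induction e with
    | _ v w =>
      simp only [SimpleGraph.Subgraph.mem_edgeSet, Set.mem_union, hNdef, hE0def,
        Set.mem_setOf_eq, Sym2.mem_iff]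
      constructor
      · rintro (h | h)
        · exact Or.inl h
        · refine Or.inr ⟨h.1, ?_⟩
          rintro x (rfl | rfl)
          · exact h.2.1
          · exact h.2.2
      · rintro (h | ⟨h1, h2⟩)
        · exact Or.inl h
        · exact Or.inr ⟨h1, h2 v (Or.inl rfl), h2 w (Or.inr rfl)⟩
  have hdisj : Disjoint L.edgeSet E0 := by
    rw [Set.disjoint_left]
    rintro e he ⟨-, h2⟩
    induction e with
    | _ v w =>
      exact h2 v (Sym2.mem_iff.mpr (Or.inl rfl))
        (L.edge_vert (SimpleGraph.Subgraph.mem_edgeSet.mp he))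
  have hcount : L.edgeSet.ncard + E0.ncard ≤ M.edgeSet.ncard := by
    have := hMmax N hN
    rwa [hNedge, Set.ncard_union_eq hdisj (Set.toFinite _) (Set.toFinite _)] at this
  -- the cover
  refine ⟨L.verts ∪ (fun e => e.out.1) '' E0, ?_, ?_⟩
  · intro e he
    induction e with
    | _ v w =>
      rw [SimpleGraph.mem_edgeSet] at he
      by_cases hv : v ∈ L.verts
      · exact ⟨v, Or.inl hv, Sym2.mem_iff.mpr (Or.inl rfl)⟩
      by_cases hw : w ∈ L.verts
      · exact ⟨w, Or.inl hw, Sym2.mem_iff.mpr (Or.inr rfl)⟩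
      by_cases hMe : M.Adj v w
      · have heE0 : s(v, w) ∈ E0 := by
          refine ⟨SimpleGraph.Subgraph.mem_edgeSet.mpr hMe, ?_⟩
          rintro x hx
          rcases Sym2.mem_iff.mp hx with rfl | rfl
          · exact hv
          · exact hw
        exact ⟨s(v, w).out.1, Or.inr ⟨s(v, w), heE0, rfl⟩, Sym2.out_fst_mem _⟩
      · -- v-w is an edge of the deleted graph avoiding V(L): contradict L maximal
        exfalso
        have hFadj : (G.deleteEdges M.edgeSet).Adj v w := by
          rw [SimpleGraph.deleteEdges_adj]
          exact ⟨he, fun h => hMe (SimpleGraph.Subgraph.mem_edgeSet.mp h)⟩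
        set L' := L ⊔ (G.deleteEdges M.edgeSet).subgraphOfAdj hFadj with hL'def
        have hsub : ((G.deleteEdges M.edgeSet).subgraphOfAdj hFadj).IsMatching :=
          SimpleGraph.Subgraph.IsMatching.subgraphOfAdj _
        have hL' : L'.IsMatching := by
          refine hL.sup hsub ?_
          rw [hL.support_eq_verts, hsub.support_eq_verts, SimpleGraph.subgraphOfAdj_verts,
            Set.disjoint_right]
          rintro x (rfl | rfl)
          · exact hv
          · exact hw
        have hle := hLmax L' hL'
        have hnotmem : s(v, w) ∉ L.edgeSet := fun h =>
          hv (L.edge_vert (SimpleGraph.Subgraph.mem_edgeSet.mp h))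
        rw [hL'def, SimpleGraph.Subgraph.edgeSet_sup,
          SimpleGraph.edgeSet_subgraphOfAdj, Set.union_singleton,
          Set.ncard_insert_of_notMem hnotmem (Set.toFinite _)] at hle
        omega
  · -- cardinality bound
    have hverts : L.verts ⊆ (fun e => e.out.1) '' L.edgeSet ∪ (fun e => e.out.2) '' L.edgeSet := by
      intro v hv
      obtain ⟨w, hw, -⟩ := hL hv
      have he : s(v, w) ∈ L.edgeSet := SimpleGraph.Subgraph.mem_edgeSet.mpr hw
      rcases mem_eq_out s(v, w) (Sym2.mem_iff.mpr (Or.inl rfl)) with h | h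
      · exact Or.inl ⟨s(v, w), he, h.symm⟩
      · exact Or.inr ⟨s(v, w), he, h.symm⟩
    have h1 : L.verts.ncard ≤ 2 * L.edgeSet.ncard := by
      calc L.verts.ncard ≤ ((fun e => e.out.1) '' L.edgeSet ∪ (fun e => e.out.2) '' L.edgeSet).ncard :=
            Set.ncard_le_ncard hverts (Set.toFinite _)
        _ ≤ ((fun e : Sym2 V => e.out.1) '' L.edgeSet).ncard
            + ((fun e : Sym2 V => e.out.2) '' L.edgeSet).ncard :=
            Set.ncard_union_le _ _
        _ ≤ L.edgeSet.ncard + L.edgeSet.ncard := by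
            gcongr <;> exact Set.ncard_image_le (Set.toFinite _)
        _ = 2 * L.edgeSet.ncard := by ring
    have h2 : ((fun e : Sym2 V => e.out.1) '' E0).ncard ≤ E0.ncard :=
      Set.ncard_image_le (Set.toFinite _)
    calc (L.verts ∪ (fun e : Sym2 V => e.out.1) '' E0).ncard
        ≤ L.verts.ncard + ((fun e : Sym2 V => e.out.1) '' E0).ncard := Set.ncard_union_le _ _
      _ ≤ 2 * L.edgeSet.ncard + E0.ncard := by omega
      _ = L.edgeSet.ncard + (L.edgeSet.ncard + E0.ncard) := by ring
      _ ≤ M.edgeSet.ncard + L.edgeSet.ncard := by omega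
end

section
/- For every integer r ≥ 2, √(r(r-1)) + √(3 + 1/(r-1)) − √(r/(r-1)) ≥ r. Moreover, for r ≥ 3 the left-hand side is at least r + 0.095, and for r ≥ 4 it is at least r + 0.135. -/
lemma sq_ge' (a b : ℝ) (hb : 0 ≤ b) (h : b^2 ≤ a) : b ≤ Real.sqrt a := by
  rw [show b = Real.sqrt (b^2) from (Real.sqrt_sq hb).symm]
  exact Real.sqrt_le_sqrt h

lemma sq_le' (a b : ℝ) (hb : 0 ≤ b) (h : a ≤ b^2) : Real.sqrt a ≤ b := by
  calc Real.sqrt a ≤ Real.sqrt (b^2) := Real.sqrt_le_sqrt h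
  _ = b := Real.sqrt_sq hb

set_option maxHeartbeats 1000000 in
lemma aux5 (x : ℝ) (hx : 5 ≤ x) :
    Real.sqrt (x * (x - 1)) + Real.sqrt (3 + 1 / (x - 1)) -
      Real.sqrt (x / (x - 1)) ≥ x + 0.135 := by
  have h1 : (0:ℝ) < x - 1 := by linarith
  set u : ℝ := 1 / (x - 1) with hu
  have hu1 : u * (x - 1) = 1 := by rw [hu]; field_simp
  have hupos : 0 < u := by positivity
  have hule : u ≤ 1/4 := by
    rw [hu, div_le_div_iff₀ h1 (by norm_num)]; linarith
  set s : ℝ := Real.sqrt 3 with hs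
  have hs0 : 0 ≤ s := Real.sqrt_nonneg _
  have hs2 : s ^ 2 = 3 := Real.sq_sqrt (by norm_num)
  have sl : 1.7320 ≤ s := sq_ge' _ _ (by norm_num) (by norm_num)
  have su : s ≤ 1.7321 := sq_le' _ _ (by norm_num) (by norm_num)
  -- A bound
  have hAge : x - 1/2 - u/8 ≤ Real.sqrt (x * (x - 1)) :=
    sq_ge' _ _ (by nlinarith) (by nlinarith)
  -- t bound
  set t : ℝ := Real.sqrt (3 + u) with ht
  have ht0 : 0 ≤ t := Real.sqrt_nonneg _
  have ht2 : t ^ 2 = 3 + u := Real.sq_sqrt (by linarith)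
  have htle2 : t ≤ 2 := sq_le' _ _ (by norm_num) (by nlinarith)
  have hts : 0 < t + s := by nlinarith
  have k1 : (2 - s) * (t + s) ≤ 1 := by
    nlinarith [mul_nonneg (by linarith : (0:ℝ) ≤ 2 - s) (by linarith : (0:ℝ) ≤ 2 - t)]
  have k3 : (2 - s) * u * (t + s) ≤ u := by
    calc (2 - s) * u * (t + s) = u * ((2 - s) * (t + s)) := by ring
    _ ≤ u * 1 := mul_le_mul_of_nonneg_left k1 hupos.le
    _ = u := mul_one u
  have k4 : 0 ≤ (t - s - (2 - s) * u) * (t + s) := by nlinarith [k3, ht2, hs2]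
  have htge : s + (2 - s) * u ≤ t := by nlinarith [k4, hts]
  -- c bound
  have hxd : x / (x - 1) = 1 + u := by
    rw [hu]; field_simp; ring
  have hc : Real.sqrt (x / (x - 1)) ≤ 1 + u/2 := by
    rw [hxd]; exact sq_le' _ _ (by linarith) (by nlinarith)
  have prod : 0 ≤ (s - 11/8) * (1/4 - u) :=
    mul_nonneg (by linarith) (by linarith)
  nlinarith [hAge, htge, hc, sl, hule, hupos, prod]

theorem stmt10 (r : ℕ) (hr : 2 ≤ r) :
    (Real.sqrt ((r : ℝ) * ((r : ℝ) - 1)) + Real.sqrt (3 + 1 / ((r : ℝ) - 1)) -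
        Real.sqrt ((r : ℝ) / ((r : ℝ) - 1)) ≥ (r : ℝ)) ∧
    (3 ≤ r →
      Real.sqrt ((r : ℝ) * ((r : ℝ) - 1)) + Real.sqrt (3 + 1 / ((r : ℝ) - 1)) -
        Real.sqrt ((r : ℝ) / ((r : ℝ) - 1)) ≥ (r : ℝ) + 0.095) ∧
    (4 ≤ r →
      Real.sqrt ((r : ℝ) * ((r : ℝ) - 1)) + Real.sqrt (3 + 1 / ((r : ℝ) - 1)) -
        Real.sqrt ((r : ℝ) / ((r : ℝ) - 1)) ≥ (r : ℝ) + 0.135) := by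
  rcases lt_or_ge r 5 with h5 | h5
  · interval_cases r
    · -- r = 2
      refine ⟨?_, by omega, by omega⟩
      norm_num
    · -- r = 3
      have b1 : (2.4494:ℝ) ≤ Real.sqrt (3 * (3-1)) := sq_ge' _ _ (by norm_num) (by norm_num)
      have b2 : (1.87082:ℝ) ≤ Real.sqrt (3 + 1/(3-1)) := sq_ge' _ _ (by norm_num) (by norm_num)
      have b3 : Real.sqrt ((3:ℝ)/(3-1)) ≤ 1.22475 := sq_le' _ _ (by norm_num) (by norm_num)
      refine ⟨?_, fun _ => ?_, by omega⟩ <;> push_cast <;> linarith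
    · -- r = 4
      have b1 : (3.4641:ℝ) ≤ Real.sqrt (4 * (4-1)) := sq_ge' _ _ (by norm_num) (by norm_num)
      have b2 : (1.82574:ℝ) ≤ Real.sqrt (3 + 1/(4-1)) := sq_ge' _ _ (by norm_num) (by norm_num)
      have b3 : Real.sqrt ((4:ℝ)/(4-1)) ≤ 1.15471 := sq_le' _ _ (by norm_num) (by norm_num)
      refine ⟨?_, fun _ => ?_, fun _ => ?_⟩ <;> push_cast <;> linarith
  · have := aux5 (r:ℝ) (by exact_mod_cast h5)
    exact ⟨by linarith, fun _ => by linarith, fun _ => by linarith⟩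
end

section
/- Let r ≥ 2 be an integer and let a_1, ..., a_r be r points in ℝ^d that are pairwise at Euclidean distance 2 (a regular simplex of side length 2). Then the optimal 1-median cost min_c ∑_i ‖a_i - c‖ equals √2 · √(r(r-1)). -/
open Finset

theorem stmt13 (r d : ℕ) (hr : 2 ≤ r) (a : Fin r → EuclideanSpace ℝ (Fin d))
    (h : ∀ i j : Fin r, i ≠ j → dist (a i) (a j) = 2) :
    ⨅ c : EuclideanSpace ℝ (Fin d), ∑ i : Fin r, ‖a i - c‖ =
      Real.sqrt 2 * Real.sqrt ((r : ℝ) * ((r : ℝ) - 1)) := by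
  have hrR : (2:ℝ) ≤ (r:ℝ) := by exact_mod_cast hr
  have hr0 : (r:ℝ) ≠ 0 := by positivity
  set c₀ : EuclideanSpace ℝ (Fin d) := (r : ℝ)⁻¹ • ∑ i, a i with hc₀
  -- norms of differences
  have hnorm : ∀ i j : Fin r, ‖a i - a j‖^2 = if i = j then 0 else 4 := by
    intro i j
    by_cases hij : i = j
    · simp [hij]
    · rw [if_neg hij, ← dist_eq_norm, h i j hij]; norm_num
  have hdsum : ∀ j : Fin r, ∑ k, ‖a j - a k‖^2 = 4*((r:ℝ)-1) := by
    intro j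
    simp only [hnorm]
    have he : ∀ x : Fin r, (if j = x then (0:ℝ) else 4) = 4 - (if j = x then 4 else 0) := by
      intro x; split <;> ring
    simp only [he, Finset.sum_sub_distrib, Finset.sum_const, Finset.sum_ite_eq,
      Finset.mem_univ, if_true, card_univ, Fintype.card_fin, nsmul_eq_mul]
    ring
  -- sum of a i - c₀ is zero
  have hsum0 : ∑ i, (a i - c₀) = 0 := by
    rw [Finset.sum_sub_distrib, Finset.sum_const, hc₀, card_univ, Fintype.card_fin,
      ← Nat.cast_smul_eq_nsmul ℝ, smul_smul, mul_inv_cancel₀ hr0, one_smul, sub_self]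
  -- key: squared norm to centroid
  have hR2 : ∀ i : Fin r, ‖a i - c₀‖^2 = 2*((r:ℝ)-1)/r := by
    intro i
    have hrepr : a i - c₀ = (r : ℝ)⁻¹ • ∑ j, (a i - a j) := by
      rw [Finset.sum_sub_distrib, Finset.sum_const, card_univ, Fintype.card_fin, smul_sub,
        ← Nat.cast_smul_eq_nsmul ℝ, smul_smul, inv_mul_cancel₀ hr0, one_smul, hc₀]
    have hinner : ∀ j k : Fin r, (inner ℝ (a i - a j) (a i - a k) : ℝ)
        = (‖a i - a j‖^2 + ‖a i - a k‖^2 - ‖a k - a j‖^2)/2 := by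
      intro j k
      have h1 : (a i - a j) - (a i - a k) = a k - a j := by abel
      have := @norm_sub_sq_real (EuclideanSpace ℝ (Fin d)) _ _ (a i - a j) (a i - a k)
      rw [h1] at this
      linarith [this]
    have hinnersum : ∀ j : Fin r, ∑ k, (inner ℝ (a i - a j) (a i - a k) : ℝ)
        = (r:ℝ) * ‖a i - a j‖^2 / 2 := by
      intro j
      have hsymm : ∑ k, ‖a k - a j‖^2 = 4*((r:ℝ)-1) := by
        rw [← hdsum j]
        exact Finset.sum_congr rfl fun k _ => by rw [norm_sub_rev]
      calc ∑ k, (inner ℝ (a i - a j) (a i - a k) : ℝ)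
          = ∑ k, (‖a i - a j‖^2 + ‖a i - a k‖^2 - ‖a k - a j‖^2)/2 :=
            Finset.sum_congr rfl fun k _ => hinner j k
        _ = ((r:ℝ) * ‖a i - a j‖^2 + (4*((r:ℝ)-1)) - (4*((r:ℝ)-1)))/2 := by
            rw [← Finset.sum_div]
            congr 1
            rw [Finset.sum_sub_distrib, Finset.sum_add_distrib, Finset.sum_const,
              hdsum i, hsymm, card_univ, Fintype.card_fin, nsmul_eq_mul]
        _ = (r:ℝ) * ‖a i - a j‖^2 / 2 := by ring
    have hfin : ‖a i - c₀‖^2 = ((r:ℝ)⁻¹)^2 * ((r:ℝ) * (4*((r:ℝ)-1)) / 2) := by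
      rw [hrepr, norm_smul, mul_pow]
      congr 1
      · rw [Real.norm_eq_abs, abs_of_nonneg (by positivity : (0:ℝ) ≤ (r:ℝ)⁻¹)]
      · rw [← real_inner_self_eq_norm_sq, sum_inner]
        calc ∑ j, (inner ℝ (a i - a j) (∑ k, (a i - a k)) : ℝ)
            = ∑ j, ∑ k, (inner ℝ (a i - a j) (a i - a k) : ℝ) := by
              exact Finset.sum_congr rfl fun j _ => inner_sum _ _ _
          _ = ∑ j, (r:ℝ) * ‖a i - a j‖^2 / 2 :=
              Finset.sum_congr rfl fun j _ => hinnersum j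
          _ = (r:ℝ) * (4*((r:ℝ)-1)) / 2 := by
              rw [← Finset.sum_div, ← Finset.mul_sum, hdsum i]
    rw [hfin]
    field_simp
    ring
  set R : ℝ := Real.sqrt (2*((r:ℝ)-1)/r) with hRdef
  have hRpos : 0 < R := Real.sqrt_pos.2 (by
    have : (1:ℝ) ≤ (r:ℝ) - 1 := by linarith
    positivity)
  have hRnorm : ∀ i : Fin r, ‖a i - c₀‖ = R := by
    intro i
    rw [hRdef, ← hR2 i, Real.sqrt_sq (norm_nonneg _)]
  have hcost0 : ∑ i : Fin r, ‖a i - c₀‖ = (r:ℝ) * R := by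
    rw [Finset.sum_congr rfl fun i _ => hRnorm i, Finset.sum_const, card_univ,
      Fintype.card_fin, nsmul_eq_mul]
  have hlow : ∀ c : EuclideanSpace ℝ (Fin d), (r:ℝ) * R ≤ ∑ i : Fin r, ‖a i - c‖ := by
    intro c
    have key : ∀ i : Fin r, (inner ℝ (a i - c) (R⁻¹ • (a i - c₀)) : ℝ) ≤ ‖a i - c‖ := by
      intro i
      calc (inner ℝ (a i - c) (R⁻¹ • (a i - c₀)) : ℝ)
          ≤ ‖a i - c‖ * ‖R⁻¹ • (a i - c₀)‖ := real_inner_le_norm _ _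
        _ = ‖a i - c‖ := by
            rw [norm_smul, hRnorm i, Real.norm_eq_abs,
              abs_of_pos (inv_pos.2 hRpos), inv_mul_cancel₀ hRpos.ne', mul_one]
    have hdecomp : ∀ i : Fin r, (inner ℝ (a i - c) (a i - c₀) : ℝ)
        = R^2 + inner ℝ (c₀ - c) (a i - c₀) := by
      intro i
      have hsplit : a i - c = (a i - c₀) + (c₀ - c) := by abel
      rw [hsplit, inner_add_left, real_inner_self_eq_norm_sq, hRnorm i]
    have hzero : ∑ i : Fin r, (inner ℝ (c₀ - c) (a i - c₀) : ℝ) = 0 := by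
      rw [← inner_sum, hsum0, inner_zero_right]
    have hsumeq : ∑ i : Fin r, (inner ℝ (a i - c) (R⁻¹ • (a i - c₀)) : ℝ) = (r:ℝ) * R := by
      calc ∑ i : Fin r, (inner ℝ (a i - c) (R⁻¹ • (a i - c₀)) : ℝ)
          = ∑ i : Fin r, R⁻¹ * (inner ℝ (a i - c) (a i - c₀) : ℝ) :=
            Finset.sum_congr rfl fun i _ => real_inner_smul_right _ _ _
        _ = R⁻¹ * ∑ i : Fin r, (R^2 + (inner ℝ (c₀ - c) (a i - c₀) : ℝ)) := by
            rw [← Finset.mul_sum]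
            congr 1
            exact Finset.sum_congr rfl fun i _ => hdecomp i
        _ = R⁻¹ * ((r:ℝ) * R^2 + 0) := by
            rw [Finset.sum_add_distrib, hzero, Finset.sum_const, card_univ,
              Fintype.card_fin, nsmul_eq_mul]
        _ = (r:ℝ) * R := by field_simp; ring
    calc (r:ℝ) * R = ∑ i : Fin r, (inner ℝ (a i - c) (R⁻¹ • (a i - c₀)) : ℝ) := hsumeq.symm
      _ ≤ ∑ i : Fin r, ‖a i - c‖ := Finset.sum_le_sum fun i _ => key i
  have hval : (r:ℝ) * R = Real.sqrt 2 * Real.sqrt ((r:ℝ) * ((r:ℝ) - 1)) := by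
    have hrpos : (0:ℝ) < r := by linarith
    rw [hRdef, ← Real.sqrt_sq hrpos.le, ← Real.sqrt_mul (sq_nonneg _),
      ← Real.sqrt_mul (by norm_num : (0:ℝ) ≤ 2)]
    congr 1
    field_simp
    rw [Real.sqrt_sq hrpos.le]
  have hbdd : BddBelow (Set.range fun c : EuclideanSpace ℝ (Fin d) => ∑ i : Fin r, ‖a i - c‖) := by
    refine ⟨(r:ℝ) * R, ?_⟩
    rintro x ⟨c, rfl⟩
    exact hlow c
  apply le_antisymm
  · calc ⨅ c : EuclideanSpace ℝ (Fin d), ∑ i : Fin r, ‖a i - c‖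
        ≤ ∑ i : Fin r, ‖a i - c₀‖ := ciInf_le hbdd c₀
      _ = Real.sqrt 2 * Real.sqrt ((r:ℝ) * ((r:ℝ) - 1)) := by rw [hcost0, hval]
  · exact le_ciInf fun c => hval ▸ hlow c
end
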